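/- Fix k ∈ (0,∞). For i = 1,…,ℓ, let (X_i,𝒳_i) and (Y_i,𝒴_i) be measurable spaces with measurable distortion functions ρ_i: X_i×Y_i → [0,∞], let α_i ∈ (0,∞), and define the weighted distortion function ρ_{(ℓ)}((x₁,…,x_ℓ),(y₁,…,y_ℓ)) = Σ_{i=1}^ℓ α_i·ρ_i(x_i,y_i). Suppose that for each i, ν_i is a σ-finite measure on (Y_i,𝒴_i) that is ρ_i^{1/k}-superregular of dimension m_i ∈ (0,∞) with superregularity constants b_i ∈ (0,∞) and δ_i ∈ (0,∞]. Then the product measure ν^{(ℓ)} = ν₁ ⊗ ⋯ ⊗ ν_ℓ satisfies ν^{(ℓ)}(B̃_{ρ_{(ℓ)}^{1/k}}(x^{(ℓ)},δ)) ≥ b_{(ℓ)}·δ^{m_{(ℓ)}} for all x^{(ℓ)} ∈ X₁×⋯×X_ℓ and δ ∈ (0,δ_{(ℓ)}), where m_{(ℓ)} = Σ_{i=1}^ℓ m_i, b_{(ℓ)} = [∏_{i=1}^ℓ Γ(1+m_i/k) / Γ(1+Σ_{i=1}^ℓ m_i/k)]·∏_{i=1}^ℓ b_i·α_i^{-m_i/k},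 and δ_{(ℓ)} = min{α₁^{1/k}δ₁,…,α_ℓ^{1/k}δ_ℓ}. -/

import Mathlib

open MeasureTheory
open scoped ENNReal

lemma real_beta_scaled {p q s : ℝ} (hp : 0 < p) (hq : 0 ≤ q) (hs : 0 < s) :
    ∫ t in (0:ℝ)..s, t ^ (p - 1) * (s - t) ^ q
      = Real.Gamma p * Real.Gamma (q + 1) / Real.Gamma (p + q + 1) * s ^ (p + q) := by
  have hG : Real.Gamma (p + q + 1) ≠ 0 := (Real.Gamma_pos_of_pos (by linarith)).ne'
  have hq1 : ((q:ℂ) + 1) = ((q + 1 : ℝ) : ℂ) := by push_cast; ring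
  have h1 := Complex.betaIntegral_scaled (p : ℂ) ((q : ℂ) + 1) hs
  have h2 : (∫ x in (0:ℝ)..s, (x:ℂ) ^ ((p:ℂ) - 1) * ((s:ℂ) - (x:ℂ)) ^ ((q:ℂ) + 1 - 1))
      = ((∫ t in (0:ℝ)..s, t ^ (p - 1) * (s - t) ^ q : ℝ) : ℂ) := by
    rw [← intervalIntegral.integral_ofReal]
    refine intervalIntegral.integral_congr fun x hx => ?_
    rw [Set.uIcc_of_le hs.le] at hx
    obtain ⟨hx0, hxs⟩ := hx
    have e1 : ((q:ℂ) + 1 - 1) = ((q:ℝ) : ℂ) := by ring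
    have e2 : ((p:ℂ) - 1) = ((p - 1 : ℝ) : ℂ) := by push_cast; ring
    rw [e1, e2, ← Complex.ofReal_sub, ← Complex.ofReal_cpow hx0, ← Complex.ofReal_cpow (by linarith),
      ← Complex.ofReal_mul]
  have h3 : Complex.Gamma (p:ℂ) * Complex.Gamma ((q:ℂ)+1)
      = Complex.Gamma ((p:ℂ) + ((q:ℂ)+1)) * Complex.betaIntegral (p:ℂ) ((q:ℂ)+1) :=
    Complex.Gamma_mul_Gamma_eq_betaIntegral (by simpa using hp) (by simp; linarith)
  have h4 : ((s:ℂ)) ^ ((p:ℂ) + ((q:ℂ)+1) - 1) = ((s ^ (p + q) : ℝ) : ℂ) := by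
    have e : ((p:ℂ) + ((q:ℂ)+1) - 1) = ((p + q : ℝ) : ℂ) := by push_cast; ring
    rw [e, ← Complex.ofReal_cpow hs.le]
  have hpq : ((p:ℂ) + ((q:ℂ)+1)) = ((p + q + 1 : ℝ) : ℂ) := by push_cast; ring
  rw [hpq, hq1, Complex.Gamma_ofReal, Complex.Gamma_ofReal, Complex.Gamma_ofReal] at h3
  have h5 : ((∫ t in (0:ℝ)..s, t ^ (p - 1) * (s - t) ^ q : ℝ) : ℂ)
        * ((Real.Gamma (p+q+1) : ℝ) : ℂ)
      = ((s ^ (p+q) : ℝ) : ℂ) * ((Real.Gamma p * Real.Gamma (q+1) : ℝ) : ℂ) := by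
    rw [← h2, h1, h4]
    push_cast at h3 ⊢
    linear_combination (-((s ^ (p+q) : ℝ) : ℂ)) * h3
  have h6 : (∫ t in (0:ℝ)..s, t ^ (p - 1) * (s - t) ^ q) * Real.Gamma (p+q+1)
      = s ^ (p+q) * (Real.Gamma p * Real.Gamma (q+1)) := by
    exact_mod_cast h5
  field_simp
  linarith [h6]

lemma lint_rpow {cp p : ℝ} (hcp : 0 ≤ cp) (hp : 0 < p) {c : ℝ} (hc : 0 < c) :
    ∫⁻ t in Set.Ioo (0:ℝ) c, ENNReal.ofReal (cp * p * t ^ (p - 1)) = ENNReal.ofReal (cp * c ^ p) := by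
  rw [← ofReal_integral_eq_lintegral_ofReal]
  · congr 1
    rw [← MeasureTheory.integral_Ioc_eq_integral_Ioo, ← intervalIntegral.integral_of_le hc.le,
      intervalIntegral.integral_const_mul, integral_rpow (Or.inl (by linarith))]
    have hp1 : p - 1 + 1 = p := by ring
    rw [hp1, Real.zero_rpow hp.ne']
    field_simp
    ring
  · exact (intervalIntegrable_iff_integrableOn_Ioo_of_le hc.le).mp
      ((intervalIntegral.intervalIntegrable_rpow' (by linarith)).const_mul _)
  · filter_upwards [ae_restrict_mem measurableSet_Ioo] with t ht
    have : (0:ℝ) < t := ht.1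
    positivity

lemma key_prod {A B : Type*} [MeasurableSpace A] [MeasurableSpace B]
    (μ : Measure A) (ν : Measure B) [SigmaFinite μ] [SigmaFinite ν]
    (f : A → ℝ≥0∞) (g : B → ℝ≥0∞) (hf : Measurable f) (hg : Measurable g)
    (p q cp cq : ℝ) (hp : 0 < p) (hq : 0 ≤ q) (hcp : 0 < cp) (hcq : 0 < cq)
    (σ τ : ℝ≥0∞)
    (Hf : ∀ s : ℝ, 0 < s → ENNReal.ofReal s < σ →
      ENNReal.ofReal (cp * s ^ p) ≤ μ {a | f a < ENNReal.ofReal s})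
    (Hg : ∀ s : ℝ, 0 < s → ENNReal.ofReal s < τ →
      ENNReal.ofReal (cq * s ^ q) ≤ ν {b | g b < ENNReal.ofReal s}) :
    ∀ s : ℝ, 0 < s → ENNReal.ofReal s < min σ τ →
      ENNReal.ofReal (Real.Gamma (1+p) * Real.Gamma (1+q) / Real.Gamma (1+p+q)
          * (cp * cq) * s ^ (p+q))
        ≤ (μ.prod ν) {x : A × B | f x.1 + g x.2 < ENNReal.ofReal s} := by
  intro s hs hlt
  set S := ENNReal.ofReal s with hS
  have hmeas : MeasurableSet {x : A × B | f x.1 + g x.2 < S} :=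
    measurableSet_lt ((hf.comp measurable_fst).add (hg.comp measurable_snd)) measurable_const
  rw [Measure.prod_apply_symm hmeas]
  set G : B → ℝ≥0∞ := Set.indicator {x : B | g x < S}
      (fun b => ENNReal.ofReal (cp * (s - (g b).toReal) ^ p)) with hG
  set F : B → ℝ → ℝ≥0∞ := fun b t =>
    Set.indicator {x : B | g x < ENNReal.ofReal (s - t)}
      (fun _ => ENNReal.ofReal (cp * p * t ^ (p - 1))) b with hF
  have step1 : ∀ b : B, G b ≤ μ ((fun a => (a, b)) ⁻¹' {x : A × B | f x.1 + g x.2 < S}) := by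
    intro b
    simp only [Set.preimage_setOf_eq]
    by_cases hb : b ∈ {x : B | g x < S}
    · rw [hG, Set.indicator_of_mem hb]
      have hbb : g b < S := hb
      have hgne : g b ≠ ⊤ := hbb.ne_top
      set v := (g b).toReal with hv
      have hv0 : 0 ≤ v := ENNReal.toReal_nonneg
      have hvs : v < s := (ENNReal.lt_ofReal_iff_toReal_lt hgne).mp hbb
      refine le_trans (Hf (s - v) (by linarith) ?_) (measure_mono ?_)
      · exact lt_of_le_of_lt (ENNReal.ofReal_le_ofReal (by linarith))
          (lt_of_lt_of_le hlt (min_le_left _ _))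
      · intro a ha
        simp only [Set.mem_setOf_eq] at *
        have hgb : g b = ENNReal.ofReal v := (ENNReal.ofReal_toReal hgne).symm
        calc f a + g b < ENNReal.ofReal (s - v) + ENNReal.ofReal v := by
              rw [hgb]; exact ENNReal.add_lt_add_right ENNReal.ofReal_ne_top ha
          _ = S := by rw [← ENNReal.ofReal_add (by linarith) hv0]; norm_num [hS]
    · rw [hG, Set.indicator_of_notMem hb]; exact bot_le
  have step2 : ∀ b : B, G b = ∫⁻ t in Set.Ioo 0 s, F b t := by
    intro b
    by_cases hb : b ∈ {x : B | g x < S}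
    · have hbb : g b < S := hb
      have hgne : g b ≠ ⊤ := hbb.ne_top
      set v := (g b).toReal with hv
      have hv0 : 0 ≤ v := ENNReal.toReal_nonneg
      have hvs : v < s := (ENNReal.lt_ofReal_iff_toReal_lt hgne).mp hbb
      have hFb : ∀ t : ℝ, F b t
          = Set.indicator (Set.Iio (s - v)) (fun t => ENNReal.ofReal (cp * p * t ^ (p - 1))) t := by
        intro t
        rw [hF]
        simp only [Set.indicator_apply, Set.mem_setOf_eq, Set.mem_Iio]
        have : g b < ENNReal.ofReal (s - t) ↔ t < s - v := by
          rw [ENNReal.lt_ofReal_iff_toReal_lt hgne, ← hv]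
          constructor <;> intro h <;> linarith
        simp [this]
      rw [hG, Set.indicator_of_mem hb]
      simp only [hFb]
      rw [lintegral_indicator measurableSet_Iio, Measure.restrict_restrict measurableSet_Iio]
      have hset : Set.Iio (s - v) ∩ Set.Ioo 0 s = Set.Ioo 0 (s - v) := by
        ext t
        simp only [Set.mem_inter_iff, Set.mem_Iio, Set.mem_Ioo]
        constructor
        · rintro ⟨h1, h2, h3⟩; exact ⟨h2, h1⟩
        · rintro ⟨h1, h2⟩; exact ⟨h2, h1, by linarith⟩
      rw [hset, lint_rpow hcp.le hp (by linarith)]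
    · rw [hG, Set.indicator_of_notMem hb]
      simp only [Set.mem_setOf_eq, not_lt] at hb
      symm
      rw [setLIntegral_congr_fun measurableSet_Ioo
        (fun t ht => ?_), lintegral_zero]
      rw [hF]
      refine Set.indicator_of_notMem ?_ _
      simp only [Set.mem_setOf_eq, not_lt]
      exact le_trans (ENNReal.ofReal_le_ofReal (by linarith [ht.1])) hb
  have hFmeas : Measurable (Function.uncurry F) := by
    have h1 : Function.uncurry F = fun x : B × ℝ =>
        Set.indicator {x : B × ℝ | g x.1 < ENNReal.ofReal (s - x.2)}
          (fun x => ENNReal.ofReal (cp * p * x.2 ^ (p - 1))) x := by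
      funext x
      rw [Function.uncurry, hF]
      simp only [Set.indicator_apply, Set.mem_setOf_eq]
    rw [h1]
    refine Measurable.indicator ?_ ?_
    · apply Measurable.ennreal_ofReal
      fun_prop
    · exact measurableSet_lt (hg.comp measurable_fst)
        ((measurable_const.sub measurable_snd).ennreal_ofReal)
  have step4 : ∀ t ∈ Set.Ioo (0:ℝ) s,
      ENNReal.ofReal (cp * p * cq * (t ^ (p - 1) * (s - t) ^ q)) ≤ ∫⁻ b, F b t ∂ν := by
    intro t ht
    have h1 : ∫⁻ b, F b t ∂ν
        = ENNReal.ofReal (cp * p * t ^ (p - 1)) * ν {x : B | g x < ENNReal.ofReal (s - t)} := by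
      rw [hF]
      exact lintegral_indicator_const (measurableSet_lt hg measurable_const) _
    rw [h1]
    have h2 : ENNReal.ofReal (cq * (s - t) ^ q) ≤ ν {x : B | g x < ENNReal.ofReal (s - t)} :=
      Hg (s - t) (by linarith [ht.2]) (lt_of_le_of_lt (ENNReal.ofReal_le_ofReal (by linarith [ht.1]))
        (lt_of_lt_of_le hlt (min_le_right _ _)))
    have ht1 : (0:ℝ) < t := ht.1
    calc ENNReal.ofReal (cp * p * cq * (t ^ (p - 1) * (s - t) ^ q))
        = ENNReal.ofReal (cp * p * t ^ (p - 1)) * ENNReal.ofReal (cq * (s - t) ^ q) := by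
          rw [← ENNReal.ofReal_mul (by positivity)]
          congr 1
          ring
      _ ≤ _ := mul_le_mul_right h2 _
  calc ENNReal.ofReal (Real.Gamma (1+p) * Real.Gamma (1+q) / Real.Gamma (1+p+q)
          * (cp * cq) * s ^ (p+q))
      = ENNReal.ofReal (∫ t in Set.Ioo (0:ℝ) s, cp * p * cq * (t ^ (p - 1) * (s - t) ^ q)) := by
        congr 1
        rw [← MeasureTheory.integral_Ioc_eq_integral_Ioo, ← intervalIntegral.integral_of_le hs.le,
          intervalIntegral.integral_const_mul, real_beta_scaled hp hq hs]
        have e1 : Real.Gamma (1+p) = p * Real.Gamma p := by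
          rw [show (1:ℝ)+p = p+1 from by ring]; exact Real.Gamma_add_one hp.ne'
        rw [e1, show (1:ℝ)+q = q+1 from by ring, show (1:ℝ)+p+q = p+q+1 from by ring]
        ring
    _ ≤ ∫⁻ t in Set.Ioo (0:ℝ) s, ENNReal.ofReal (cp * p * cq * (t ^ (p-1) * (s-t) ^ q)) := by
        rw [ofReal_integral_eq_lintegral_ofReal]
        · exact (intervalIntegrable_iff_integrableOn_Ioo_of_le hs.le).mp
            (((intervalIntegral.intervalIntegrable_rpow' (by linarith)).mul_continuousOn
              (((continuous_const.sub continuous_id).continuousOn).rpow_const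
                (fun x _ => Or.inr hq))).const_mul _)
        · filter_upwards [ae_restrict_mem measurableSet_Ioo] with t ht
          have ht1 : (0:ℝ) < t := ht.1
          have ht2 : (0:ℝ) ≤ s - t := by linarith [ht.2]
          positivity
    _ ≤ ∫⁻ t in Set.Ioo (0:ℝ) s, ∫⁻ b, F b t ∂ν := by
        refine lintegral_mono_ae ?_
        filter_upwards [ae_restrict_mem measurableSet_Ioo] with t ht
        exact step4 t ht
    _ = ∫⁻ b, (∫⁻ t in Set.Ioo (0:ℝ) s, F b t) ∂ν := by
        exact (lintegral_lintegral_swap hFmeas.aemeasurable).symm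
    _ = ∫⁻ b, G b ∂ν := by
        refine lintegral_congr fun b => (step2 b).symm
    _ ≤ _ := lintegral_mono step1

universe u

lemma aux_pi : ∀ (n : ℕ) {Y : Fin n → Type u} [∀ i, MeasurableSpace (Y i)]
    (ν : ∀ i, Measure (Y i)) [∀ i, SigmaFinite (ν i)]
    (g : ∀ i, Y i → ℝ≥0∞) (_ : ∀ i, Measurable (g i))
    (p c : Fin n → ℝ) (σ : Fin n → ℝ≥0∞)
    (_ : ∀ i, 0 < p i) (_ : ∀ i, 0 < c i)
    (_ : ∀ i, ∀ s : ℝ, 0 < s → ENNReal.ofReal s < σ i →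
      ENNReal.ofReal (c i * s ^ p i) ≤ ν i {y | g i y < ENNReal.ofReal s})
    (s : ℝ), 0 < s → ENNReal.ofReal s < ⨅ i, σ i →
    ENNReal.ofReal ((∏ i, Real.Gamma (1 + p i)) / Real.Gamma (1 + ∑ i, p i)
        * (∏ i, c i) * s ^ (∑ i, p i))
      ≤ Measure.pi ν {y | (∑ i, g i (y i)) < ENNReal.ofReal s} := by
  intro n
  induction n with
  | zero =>
    intro Y _ ν _ g hg p c σ hp hc H s hs hlt
    rw [Measure.pi_of_empty ν]
    have hmem : (fun a => isEmptyElim a : ∀ i, Y i) ∈ {y : ∀ i, Y i | (∑ i, g i (y i)) < ENNReal.ofReal s} := by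
      simp only [Set.mem_setOf_eq, Finset.univ_eq_empty, Finset.sum_empty]
      exact ENNReal.ofReal_pos.mpr hs
    rw [Measure.dirac_apply_of_mem hmem]
    simp only [Finset.univ_eq_empty, Finset.prod_empty, Finset.sum_empty, Real.rpow_zero,
      Real.Gamma_one]
    norm_num
  | succ n IH =>
    intro Y _ ν _ g hg p c σ hp hc H s hs hlt
    set B := ∀ j : Fin n, Y (Fin.succ j) with hB
    set νB : Measure B := Measure.pi (fun j => ν (Fin.succ j)) with hνB
    set gB : B → ℝ≥0∞ := fun y => ∑ j, g (Fin.succ j) (y j) with hgB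
    set q : ℝ := ∑ j, p (Fin.succ j) with hqdef
    set cq : ℝ := (∏ j, Real.Gamma (1 + p (Fin.succ j))) / Real.Gamma (1 + q)
        * ∏ j, c (Fin.succ j) with hcqdef
    set τ : ℝ≥0∞ := ⨅ j, σ (Fin.succ j) with hτdef
    have hq : 0 ≤ q := Finset.sum_nonneg fun j _ => (hp _).le
    have hΓq : 0 < Real.Gamma (1 + q) := Real.Gamma_pos_of_pos (by linarith)
    have hcq : 0 < cq := by
      apply mul_pos (div_pos ?_ hΓq) (Finset.prod_pos fun j _ => hc _)
      exact Finset.prod_pos fun j _ => Real.Gamma_pos_of_pos (by linarith [hp (Fin.succ j)])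
    have hgBmeas : Measurable gB :=
      Finset.measurable_sum _ (fun j _ => (hg _).comp (measurable_pi_apply j))
    have Hg : ∀ s' : ℝ, 0 < s' → ENNReal.ofReal s' < τ →
        ENNReal.ofReal (cq * s' ^ q) ≤ νB {y : B | gB y < ENNReal.ofReal s'} := by
      intro s' hs' hlt'
      have := IH (fun j => ν (Fin.succ j))
        (fun j => g (Fin.succ j)) (fun j => hg _)
        (fun j => p (Fin.succ j)) (fun j => c (Fin.succ j))
        (fun j => σ (Fin.succ j)) (fun j => hp _) (fun j => hc _)
        (fun j => H _) s' hs' hlt'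
      rw [hcqdef, mul_assoc]
      rw [mul_assoc] at this
      exact this
    have hmin : ENNReal.ofReal s < min (σ 0) τ :=
      lt_min (hlt.trans_le (iInf_le _ 0)) (hlt.trans_le (le_iInf fun j => iInf_le _ _))
    have key := key_prod (ν 0) νB (g 0) gB (hg 0) hgBmeas (p 0) q (c 0) cq (hp 0) hq (hc 0) hcq
      (σ 0) τ (H 0) Hg s hs hmin
    have hsetB : MeasurableSet {x : Y 0 × B | g 0 x.1 + gB x.2 < ENNReal.ofReal s} :=
      measurableSet_lt (((hg 0).comp measurable_fst).add (hgBmeas.comp measurable_snd))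
        measurable_const
    have hmeq : Measure.pi ν {y : ∀ i, Y i | (∑ i, g i (y i)) < ENNReal.ofReal s}
        = ((ν 0).prod νB) {x : Y 0 × B | g 0 x.1 + gB x.2 < ENNReal.ofReal s} := by
      have hpre := (measurePreserving_piFinSuccAbove ν 0).measure_preimage
        (s := {x : Y 0 × B | g 0 x.1 + gB x.2 < ENNReal.ofReal s}) hsetB.nullMeasurableSet
      refine Eq.trans ?_ hpre
      congr 1
      ext y
      simp only [Set.mem_preimage, Set.mem_setOf_eq]
      rw [Fin.sum_univ_succ (fun i => g i (y i))]
      rfl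
    rw [hmeq]
    refine le_trans (le_of_eq ?_) key
    congr 1
    rw [Fin.sum_univ_succ p, Fin.prod_univ_succ (fun i => Real.Gamma (1 + p i)),
      Fin.prod_univ_succ c, ← hqdef, hcqdef]
    have h1 : Real.Gamma (1 + (p 0 + q)) = Real.Gamma (1 + p 0 + q) := by ring_nf
    have h2 : Real.Gamma (1 + p 0 + q) ≠ 0 :=
      (Real.Gamma_pos_of_pos (by linarith [hp 0])).ne'
    rw [h1]
    field_simp


/-- Superregularity of the product measure `ν₁ ⊗ ⋯ ⊗ ν_ℓ` with respect to
the `1/k`-th power of the weighted distortion `ρ_{(ℓ)}(x,y) = Σᵢ αᵢ·ρᵢ(xᵢ,yᵢ)`, for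
σ-finite measures `νᵢ` that are `ρᵢ^{1/k}`-superregular of dimension `mᵢ` with constants
`bᵢ, δᵢ`. -/
theorem superregular_pi
    {ℓ : ℕ} (hℓ : 0 < ℓ)
    {X Y : Fin ℓ → Type*} [∀ i, MeasurableSpace (X i)] [∀ i, MeasurableSpace (Y i)]
    (k : ℝ) (hk : 0 < k)
    (ρ : ∀ i, X i → Y i → ℝ≥0∞) (hρ : ∀ i, Measurable (Function.uncurry (ρ i)))
    (α : Fin ℓ → ℝ) (hα : ∀ i, 0 < α i)
    (ν : ∀ i, Measure (Y i)) [∀ i, SigmaFinite (ν i)]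
    (m b : Fin ℓ → ℝ) (δ : Fin ℓ → ℝ≥0∞)
    (hm : ∀ i, 0 < m i) (hb : ∀ i, 0 < b i) (hδ : ∀ i, 0 < δ i)
    (hsup : ∀ i, ∀ x : X i, ∀ t : ℝ, 0 < t → ENNReal.ofReal t < δ i →
      ENNReal.ofReal (b i * t ^ m i) ≤ (ν i) {y | (ρ i x y) ^ (1 / k) < ENNReal.ofReal t}) :
    ∀ x : ∀ i, X i, ∀ t : ℝ, 0 < t →
      ENNReal.ofReal t < ⨅ i, ENNReal.ofReal (α i ^ (1 / k)) * δ i →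
      ENNReal.ofReal
          ((∏ i, Real.Gamma (1 + m i / k)) / Real.Gamma (1 + ∑ i, m i / k) *
            (∏ i, b i * α i ^ (-(m i / k))) *
            t ^ (∑ i, m i)) ≤
        (Measure.pi ν)
          {y : ∀ i, Y i | (∑ i, ENNReal.ofReal (α i) * ρ i (x i) (y i)) ^ (1 / k)
            < ENNReal.ofReal t} := by
  intro x t ht hlt
  have hk' : (0:ℝ) < 1 / k := by positivity
  set p : Fin ℓ → ℝ := fun i => m i / k with hpdef
  set c : Fin ℓ → ℝ := fun i => b i * α i ^ (-(m i / k)) with hcdef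
  set g : ∀ i, Y i → ℝ≥0∞ := fun i y => ENNReal.ofReal (α i) * ρ i (x i) y with hgdef
  set σ : Fin ℓ → ℝ≥0∞ := fun i => (ENNReal.ofReal (α i ^ (1 / k)) * δ i) ^ k with hσdef
  have hg : ∀ i, Measurable (g i) := fun i =>
    measurable_const.mul ((hρ i).comp measurable_prodMk_left)
  have hp : ∀ i, 0 < p i := fun i => by
    have := hm i; simp only [hpdef]; positivity
  have hc : ∀ i, 0 < c i := fun i => by
    have h1 := hb i; have h2 := hα i; simp only [hcdef]; positivity
  have H : ∀ i, ∀ s : ℝ, 0 < s → ENNReal.ofReal s < σ i →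
      ENNReal.ofReal (c i * s ^ p i) ≤ ν i {y | g i y < ENNReal.ofReal s} := by
    intro i s hs hsσ
    have ha : (0:ℝ) < α i := hα i
    set t' : ℝ := (s / α i) ^ (1 / k) with ht'def
    have ht' : 0 < t' := by positivity
    have hofa0 : ENNReal.ofReal (α i) ≠ 0 := by
      simp [ENNReal.ofReal_eq_zero, not_le, ha]
    have hofat : ENNReal.ofReal (α i) ≠ ⊤ := ENNReal.ofReal_ne_top
    have hEt' : ENNReal.ofReal t' = (ENNReal.ofReal (s / α i)) ^ (1 / k) := by
      rw [ENNReal.ofReal_rpow_of_pos (by positivity)]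
    have e1 : (ENNReal.ofReal (α i ^ (1 / k))) ^ k = ENNReal.ofReal (α i) := by
      rw [ENNReal.ofReal_rpow_of_pos (by positivity : (0:ℝ) < α i ^ (1 / k))]
      congr 1
      rw [← Real.rpow_mul ha.le, one_div, inv_mul_cancel₀ hk.ne', Real.rpow_one]
    have hσi : σ i = ENNReal.ofReal (α i) * δ i ^ k := by
      simp only [hσdef]
      rw [ENNReal.mul_rpow_of_nonneg _ _ hk.le, e1]
    have hδk : ENNReal.ofReal (s / α i) < δ i ^ k := by
      rw [ENNReal.ofReal_div_of_pos ha, ENNReal.div_lt_iff (Or.inl hofa0) (Or.inl hofat)]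
      rw [hσi, mul_comm] at hsσ
      exact hsσ
    have hδ' : ENNReal.ofReal t' < δ i := by
      rw [hEt']
      have hδrw : δ i = (δ i ^ k) ^ (1 / k) := by
        rw [← ENNReal.rpow_mul, mul_one_div, div_self hk.ne', ENNReal.rpow_one]
      rw [hδrw]
      exact ENNReal.rpow_lt_rpow hδk hk'
    have hseteq : {y | g i y < ENNReal.ofReal s}
        = {y | (ρ i (x i) y) ^ (1 / k) < ENNReal.ofReal t'} := by
      ext y
      simp only [hgdef, Set.mem_setOf_eq]
      rw [hEt', ENNReal.rpow_lt_rpow_iff hk', ENNReal.ofReal_div_of_pos ha,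
        ENNReal.lt_div_iff_mul_lt (Or.inl hofa0) (Or.inl hofat), mul_comm]
    have hconst : c i * s ^ p i = b i * t' ^ m i := by
      have e : t' ^ m i = s ^ (m i / k) * (α i ^ (m i / k))⁻¹ := by
        rw [ht'def, ← Real.rpow_mul (by positivity), show 1 / k * m i = m i / k from by ring,
          Real.div_rpow hs.le ha.le, div_eq_mul_inv]
      rw [e]
      simp only [hcdef, hpdef]
      rw [Real.rpow_neg ha.le]
      ring
    rw [hseteq, hconst]
    exact hsup i (x i) t' ht' hδ'
  have hterm : ENNReal.ofReal (t ^ k) < ⨅ i, σ i := by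
    have h1 : ENNReal.ofReal (t ^ k) = (ENNReal.ofReal t) ^ k :=
      (ENNReal.ofReal_rpow_of_pos ht).symm
    rw [h1]
    refine lt_of_lt_of_le (ENNReal.rpow_lt_rpow hlt hk) (le_iInf fun i => ?_)
    simp only [hσdef]
    exact ENNReal.rpow_le_rpow (iInf_le _ i) hk.le
  have hsets : {y : ∀ i, Y i | (∑ i, ENNReal.ofReal (α i) * ρ i (x i) (y i)) ^ (1 / k)
        < ENNReal.ofReal t}
      = {y : ∀ i, Y i | (∑ i, g i (y i)) < ENNReal.ofReal (t ^ k)} := by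
    ext y
    simp only [Set.mem_setOf_eq, hgdef]
    have hrw : ENNReal.ofReal t = (ENNReal.ofReal (t ^ k)) ^ (1 / k) := by
      rw [ENNReal.ofReal_rpow_of_pos (by positivity : (0:ℝ) < t ^ k)]
      congr 1
      rw [← Real.rpow_mul ht.le, mul_one_div, div_self hk.ne', Real.rpow_one]
    rw [hrw, ENNReal.rpow_lt_rpow_iff hk']
  have hfinal := aux_pi ℓ ν g hg p c σ hp hc H (t ^ k) (by positivity) hterm
  rw [hsets]
  refine le_trans (le_of_eq ?_) hfinal
  congr 1
  simp only [hpdef, hcdef]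
  congr 1
  rw [← Real.rpow_mul ht.le, ← Finset.sum_div, mul_div_cancel₀ _ hk.ne']
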